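/- Let G = H(T,C) be a generalized Halin graph with positive Lin-Lu-Yau curvature on every edge, and let x attain the maximum degree D(T) of T. If a component A_i of T − x contains at least two cycle vertices, then both neighboring components A_{i−1} and A_{i+1} (indices mod c) contain exactly one cycle vertex. -/

import Mathlib

open SimpleGraph

attribute [local instance] Classical.propDecidable

variable {V : Type*}

/-- Normalized graph Laplacian applied to an integer-valued function. -/
noncomputable def lap (G : SimpleGraph V) [∀ v : V, Fintype (G.neighborSet v)]
    (f : V → ℤ) (v : V) : ℝ :=
  (∑ w ∈ G.neighborFinset v, ((f w : ℝ) - (f v : ℝ))) / (G.degree v : ℝ)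

/-- Lin-Lu-Yau curvature via the Laplacian (Münch–Wojciechowski) formulation:
the infimum of `Δf(x) − Δf(y)` over integer-valued functions that are
1-Lipschitz on `N[x] ∪ N[y]` and satisfy `f(y) − f(x) = 1`. -/
noncomputable def kappaLLY (G : SimpleGraph V) [∀ v : V, Fintype (G.neighborSet v)]
    (x y : V) : ℝ :=
  sInf { r : ℝ | ∃ f : V → ℤ,
    (∀ u ∈ insert x (G.neighborSet x) ∪ insert y (G.neighborSet y),
      ∀ v ∈ insert x (G.neighborSet x) ∪ insert y (G.neighborSet y),
        |f u - f v| ≤ (G.dist u v : ℤ)) ∧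
    f y - f x = 1 ∧ r = lap G f x - lap G f y }

/-- The edge `{p,q}` is contained in no triangle and no 4-cycle. -/
def noC3C4 (G : SimpleGraph V) (p q : V) : Prop :=
  (∀ z : V, ¬ (G.Adj p z ∧ G.Adj z q)) ∧
  (∀ u v : V, G.Adj p u → G.Adj u v → G.Adj v q → u = q ∨ v = p)

/-- The wheel graph on `Fin n`: hub `0` joined to the rim cycle `1, …, n-1`. -/
noncomputable def wheel (n : ℕ) : SimpleGraph (Fin n) :=
  SimpleGraph.fromRel (fun a b =>
    a.val = 0 ∨ b.val = a.val + 1 ∨ (a.val = n - 1 ∧ b.val = 1))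

/-- `u` and `v` lie in the same component of `T − x`. -/
def SameComp (T : SimpleGraph V) (x u v : V) : Prop :=
  ∃ w : T.Walk u v, x ∉ w.support

/-- The generalized Halin graph obtained from the tree `T` by joining its
leaves, listed in the cyclic order `σ`, by a cycle. -/
noncomputable def halinGraph (T : SimpleGraph V) {ℓ : ℕ} (σ : ZMod ℓ → V) : SimpleGraph V :=
  T ⊔ SimpleGraph.fromRel (fun a b => ∃ i : ZMod ℓ, a = σ i ∧ b = σ (i + 1))

/-- Distance from a vertex to a set of vertices. -/
noncomputable def distToSet (G : SimpleGraph V) (S : Set V) (z : V) : ℕ :=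
  sInf {d : ℕ | ∃ s ∈ S, d = G.dist z s}




section Aux
set_option linter.unusedSectionVars false
variable {V : Type*}

lemma sc_refl {T : SimpleGraph V} {x u : V} (h : x ≠ u) : SameComp T x u u :=
  ⟨SimpleGraph.Walk.nil, by simp [h]⟩

lemma sc_symm {T : SimpleGraph V} {x u v : V} (h : SameComp T x u v) : SameComp T x v u := by
  obtain ⟨w, hw⟩ := h
  exact ⟨w.reverse, by simpa [SimpleGraph.Walk.support_reverse] using hw⟩

lemma sc_trans {T : SimpleGraph V} {x u v z : V} (h : SameComp T x u v)
    (h' : SameComp T x v z) : SameComp T x u z := by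
  obtain ⟨w, hw⟩ := h; obtain ⟨w', hw'⟩ := h'
  refine ⟨w.append w', ?_⟩
  rw [SimpleGraph.Walk.mem_support_append_iff]
  tauto

lemma sc_ne_x {T : SimpleGraph V} {x u v : V} (h : SameComp T x u v) : x ≠ u ∧ x ≠ v := by
  obtain ⟨w, hw⟩ := h
  exact ⟨fun he => hw (he ▸ w.start_mem_support), fun he => hw (he ▸ w.end_mem_support)⟩

/-- In a tree, every path realizes the distance. -/
lemma tree_path_length {T : SimpleGraph V} (hT : T.IsTree) {u v : V} {p : T.Walk u v}
    (hp : p.IsPath) : T.dist u v = p.length := by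
  obtain ⟨q, hq, hql⟩ := hT.isConnected.exists_path_of_dist u v
  rw [← hql]
  congr 1
  exact ((hT.existsUnique_path u v).unique hq hp) ▸ rfl

/-- A degree one vertex has a unique neighbor. -/
lemma deg_one_nbr [Fintype V] {T : SimpleGraph V} {v w w' : V} (h : T.degree v = 1)
    (h1 : T.Adj v w) (h2 : T.Adj v w') : w = w' := by
  rw [← T.card_neighborFinset_eq_degree] at h
  obtain ⟨a, ha⟩ := Finset.card_eq_one.mp h
  have hw := (T.mem_neighborFinset v w).2 h1
  have hw' := (T.mem_neighborFinset v w').2 h2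
  rw [ha, Finset.mem_singleton] at hw hw'
  rw [hw, hw']

lemma deg_pos_of_adj [Fintype V] {T : SimpleGraph V} {v w : V} (h : T.Adj v w) :
    0 < T.degree v := (T.degree_pos_iff_exists_adj v).2 ⟨w, h⟩

/-- Two leaves of a graph having a vertex of degree ≥ 3 are not adjacent. -/
lemma no_adj_leaves [Fintype V] {T : SimpleGraph V} (hc : T.Connected) {a b x : V}
    (hab : T.Adj a b) (ha : T.degree a = 1) (hb : T.degree b = 1) (hx : 3 ≤ T.degree x) :
    False := by
  have hxa : x ≠ a := fun h => by rw [h, ha] at hx; omega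
  have hxb : x ≠ b := fun h => by rw [h, hb] at hx; omega
  obtain ⟨q, hq, -⟩ := hc.exists_path_of_dist x a
  have hq' := hq.reverse
  cases hrev : q.reverse with
  | nil => exact hxa rfl
  | cons h r =>
    rw [hrev] at hq'
    have hw1 : _ = b := deg_one_nbr ha h hab
    subst hw1
    cases r with
    | nil => exact hxb rfl
    | cons h2 r2 =>
      have hw2 : _ = a := deg_one_nbr hb h2 (T.adj_symm hab)
      subst hw2
      have hnd := hq'.support_nodup
      simp only [Walk.support_cons, List.nodup_cons] at hnd
      exact hnd.1 (List.mem_cons.2 (Or.inr r2.start_mem_support))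


/-- Concatenating a fresh vertex to a path gives a path. -/
lemma isPath_concat {G : SimpleGraph V} {u v w : V} {p : G.Walk u v} (hp : p.IsPath)
    (h : G.Adj v w) (hw : w ∉ p.support) : (p.concat h).IsPath := by
  rw [← Walk.isPath_reverse_iff, Walk.reverse_concat]
  exact Walk.IsPath.cons ((Walk.isPath_reverse_iff p).2 hp)
    (by rwa [Walk.support_reverse, List.mem_reverse])

/-- In a tree, a non-leaf vertex `y ≠ x` has a neighbor farther from `x`. -/
lemma exists_farther [Fintype V] {T : SimpleGraph V} (hT : T.IsTree) {x y : V} (hxy : x ≠ y)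
    (hdeg : 2 ≤ T.degree y) :
    ∃ w, T.Adj y w ∧ T.dist x w = T.dist x y + 1 := by
  classical
  obtain ⟨P, hP, hPl⟩ := hT.isConnected.exists_path_of_dist x y
  have hd1 : 0 < T.dist x y := hT.isConnected.pos_dist_of_ne hxy
  -- decompose P = Q.concat e
  have hq' := hP.reverse
  cases hrev : P.reverse with
  | nil => exact absurd rfl hxy
  | cons h r =>
    -- h : T.Adj y u, r : T.Walk u x
    rename_i u
    have hPeq : P = r.reverse.concat h.symm := by
      have := congrArg Walk.reverse hrev
      rw [Walk.reverse_reverse] at this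
      rw [this, Walk.reverse_cons, Walk.concat_eq_append]
    set Q := r.reverse with hQdef
    have hQpath : Q.IsPath := by
      rw [hrev] at hq'
      exact (Walk.isPath_reverse_iff r).2 (hq'.of_cons)
    have hynQ : y ∉ Q.support := by
      have := hP.support_nodup
      rw [hPeq, Walk.support_concat] at this
      intro hmem
      rw [List.nodup_append] at this
      exact this.2.2 y hmem y (by simp) rfl
    have hdistu : T.dist x u = T.dist x y - 1 := by
      have := tree_path_length hT hQpath
      have hlen : P.length = Q.length + 1 := by rw [hPeq, Walk.length_concat]
      omega
    -- pick a neighbor w ≠ u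
    have hcard : 1 < (T.neighborFinset y).card := by
      rwa [T.card_neighborFinset_eq_degree]
    obtain ⟨w, hwmem, hwu⟩ := Finset.exists_mem_ne hcard u
    have hadj : T.Adj y w := (T.mem_neighborFinset y w).1 hwmem
    refine ⟨w, hadj, ?_⟩
    have hwy : w ≠ y := fun he => T.irrefl (he ▸ hadj)
    have hwP : w ∉ P.support := by
      intro hmem
      rw [hPeq, Walk.support_concat, List.mem_append] at hmem
      rcases hmem with hmem | hmem
      · -- w in Q.support : two paths from w to y, contradiction
        have hp1 : (Walk.cons (T.adj_symm hadj) Walk.nil : T.Walk w y).IsPath := by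
          simp [hwy]
        have hp2 : ((Q.dropUntil w hmem).concat h.symm).IsPath :=
          isPath_concat (hQpath.dropUntil hmem) h.symm
            (fun hc => hynQ ((Walk.support_dropUntil_subset Q hmem) hc))
        have := (hT.existsUnique_path w y).unique hp1 hp2
        have hlen := congrArg Walk.length this
        simp only [Walk.length_cons, Walk.length_nil, Walk.length_concat] at hlen
        exact hwu (Walk.eq_of_length_eq_zero (p := Q.dropUntil w hmem) (by omega))
      · exact hwy (List.mem_singleton.mp hmem)
    have hP'path : (P.concat hadj).IsPath := isPath_concat hP hadj hwP
    have := tree_path_length hT hP'path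
    rw [Walk.length_concat, hPl] at this
    exact this

/-- Every vertex `y ≠ x` is in the same component of `T − x` as some leaf. -/
lemma exists_leaf [Fintype V] {T : SimpleGraph V} (hT : T.IsTree) {x y : V} (hxy : x ≠ y) :
    ∃ z, T.degree z = 1 ∧ SameComp T x z y := by
  classical
  suffices h : ∀ n (y : V), x ≠ y → Fintype.card V ≤ T.dist x y + n →
      ∃ z, T.degree z = 1 ∧ SameComp T x z y by
    exact h (Fintype.card V) y hxy (by omega)
  intro n
  induction n with
  | zero =>
    intro y hxy hcard
    exfalso
    obtain ⟨P, hP, hPl⟩ := hT.isConnected.exists_path_of_dist x y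
    have h1 : P.support.length = P.length + 1 := Walk.length_support P
    have h2 : P.support.length ≤ Fintype.card V := List.Nodup.length_le_card hP.support_nodup
    omega
  | succ n ih =>
    intro y hxy hcard
    by_cases hdeg : T.degree y = 1
    · exact ⟨y, hdeg, sc_refl hxy⟩
    · have hdeg1 : 1 ≤ T.degree y := by
        obtain ⟨P, hP, hPl⟩ := hT.isConnected.exists_path_of_dist x y
        cases hrev : P.reverse with
        | nil => exact absurd rfl hxy
        | cons h r => exact deg_pos_of_adj h
      have h2 : 2 ≤ T.degree y := by omega
      obtain ⟨w, hadj, hdw⟩ := exists_farther hT hxy h2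
      have hxw : x ≠ w := by
        intro he
        rw [← he, SimpleGraph.dist_self] at hdw
        have := hT.isConnected.pos_dist_of_ne hxy
        omega
      obtain ⟨z, hz, hsc⟩ := ih w hxw (by omega)
      refine ⟨z, hz, sc_trans hsc ⟨Walk.cons (T.adj_symm hadj) Walk.nil, ?_⟩⟩
      simp [hxw, hxy]


/-- Distinct neighbors of `x` in a tree lie in different components of `T − x`. -/
lemma distinct_comps [Fintype V] {T : SimpleGraph V} (hT : T.IsTree) {x y1 y2 : V}
    (h1 : T.Adj x y1) (h2 : T.Adj x y2) (hne : y1 ≠ y2) : ¬ SameComp T x y1 y2 := by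
  rintro ⟨w, hw⟩
  have hP := w.toPath
  have hxP : x ∉ (w.toPath : T.Walk y1 y2).support :=
    fun hc => hw (Walk.support_toPath_subset w hc)
  have hp2 : (Walk.cons (T.adj_symm h1) (Walk.cons h2 Walk.nil) : T.Walk y1 y2).IsPath := by
    simp [h1.ne', h2.ne, hne]
  have := (hT.existsUnique_path y1 y2).unique (w.toPath).2 hp2
  apply hxP
  rw [this]
  simp


lemma zmod_natCast_ne {ℓ : ℕ} {n : ℕ} (h0 : 0 < n) (h2 : n < ℓ) : ((n : ℕ) : ZMod ℓ) ≠ 0 := by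
  intro h
  rw [ZMod.natCast_eq_zero_iff] at h
  have hd := h
  have := Nat.le_of_dvd h0 hd
  omega

lemma halin_adj {T : SimpleGraph V} {ℓ : ℕ} {σ : ZMod ℓ → V} {a b : V} :
    (halinGraph T σ).Adj a b ↔ T.Adj a b ∨ (a ≠ b ∧
      ((∃ m : ZMod ℓ, a = σ m ∧ b = σ (m + 1)) ∨ (∃ m : ZMod ℓ, b = σ m ∧ a = σ (m + 1)))) := by
  simp [halinGraph, SimpleGraph.fromRel_adj]

section Halin

variable [Fintype V] {T : SimpleGraph V} {ℓ : ℕ} {σ : ZMod ℓ → V} {x : V}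

/-- Characterization of neighbors of a leaf in the Halin graph. -/
lemma halin_leaf_nbr (hℓ : 3 ≤ ℓ) (hinj : Function.Injective σ) {k : ZMod ℓ} {t : V}
    (hd : T.degree (σ k) = 1) (ht : T.Adj (σ k) t) (b : V) :
    (halinGraph T σ).Adj (σ k) b ↔ b = t ∨ b = σ (k + 1) ∨ b = σ (k - 1) := by
  have h1 : (1 : ZMod ℓ) ≠ 0 := by
    have := zmod_natCast_ne (n := 1) (by omega) (by omega : 1 < ℓ); simpa using this
  constructor
  · intro hadj
    rcases halin_adj.mp hadj with htadj | ⟨hne, hcyc | hcyc⟩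
    · exact Or.inl (deg_one_nbr hd ht htadj).symm
    · obtain ⟨m, hm1, hm2⟩ := hcyc
      exact Or.inr (Or.inl (by rw [hm2, hinj hm1]))
    · obtain ⟨m, hm1, hm2⟩ := hcyc
      refine Or.inr (Or.inr ?_)
      have : k = m + 1 := hinj hm2
      rw [hm1, this]
      congr 1
      ring
  · rintro (rfl | rfl | rfl)
    · exact halin_adj.mpr (Or.inl ht)
    · refine halin_adj.mpr (Or.inr ⟨fun he => ?_, Or.inl ⟨k, rfl, rfl⟩⟩)
      have : k = k + 1 := hinj he
      apply h1
      linear_combination -this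
    · refine halin_adj.mpr (Or.inr ⟨fun he => ?_, Or.inr ⟨k - 1, rfl, by rw [sub_add_cancel]⟩⟩)
      have : k = k - 1 := hinj he
      apply h1
      linear_combination this

/-- The tree-neighbor of a leaf is not a leaf. -/
lemma halin_t_not_leaf (hT : T.IsTree)
    (hleaf : ∀ v : V, v ∈ Set.range σ ↔ T.degree v = 1) (hx : 3 ≤ T.degree x)
    {k : ZMod ℓ} {t : V} (hd : T.degree (σ k) = 1) (ht : T.Adj (σ k) t) :
    t ∉ Set.range σ := by
  intro hr
  exact no_adj_leaves hT.isConnected ht hd ((hleaf t).1 hr) hx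

/-- Leaves have degree at least 3 in the Halin graph. -/
lemma halin_leaf_deg3 (hℓ : 3 ≤ ℓ) (hT : T.IsTree) (hinj : Function.Injective σ)
    (hleaf : ∀ v : V, v ∈ Set.range σ ↔ T.degree v = 1) (hx : 3 ≤ T.degree x)
    {k : ZMod ℓ} {t : V} (hd : T.degree (σ k) = 1) (ht : T.Adj (σ k) t) :
    3 ≤ (halinGraph T σ).degree (σ k) := by
  classical
  have htr := halin_t_not_leaf hT hleaf hx hd ht
  have h2 : (2 : ZMod ℓ) ≠ 0 := by
    have := zmod_natCast_ne (n := 2) (by omega) (by omega : 2 < ℓ); simpa using this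
  have hsub : {t, σ (k + 1), σ (k - 1)} ⊆ (halinGraph T σ).neighborFinset (σ k) := by
    intro b hb
    rw [SimpleGraph.mem_neighborFinset, halin_leaf_nbr hℓ hinj hd ht]
    simpa using hb
  have hcard : ({t, σ (k + 1), σ (k - 1)} : Finset V).card = 3 := by
    rw [Finset.card_insert_of_notMem (by
      simp only [Finset.mem_insert, Finset.mem_singleton]
      rintro (he | he) <;> exact htr ⟨_, he.symm⟩),
      Finset.card_insert_of_notMem (by
      simp only [Finset.mem_singleton]
      intro he
      have : k + 1 = k - 1 := hinj he
      exact h2 (by linear_combination this)), Finset.card_singleton]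
  calc 3 = ({t, σ (k + 1), σ (k - 1)} : Finset V).card := hcard.symm
    _ ≤ _ := Finset.card_le_card hsub

lemma halin_connected (hT : T.IsTree) : (halinGraph T σ).Connected :=
  hT.isConnected.mono le_sup_left

end Halin


lemma contigApp {ℓ : ℕ} (hℓ5 : 5 ≤ ℓ) {T : SimpleGraph V} {x : V} {σ : ZMod ℓ → V}
    (hinj : Function.Injective σ)
    (contig : ∀ i j : ZMod ℓ, SameComp T x (σ i) (σ j) →
      (∃ k : ℕ, σ (i + (k : ZMod ℓ)) = σ j ∧
        ∀ m : ℕ, m ≤ k → SameComp T x (σ i) (σ (i + (m : ZMod ℓ)))) ∨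
      (∃ k : ℕ, σ (j + (k : ZMod ℓ)) = σ i ∧
        ∀ m : ℕ, m ≤ k → SameComp T x (σ j) (σ (j + (m : ZMod ℓ)))))
    {a : ZMod ℓ} (hsc : SameComp T x (σ a) (σ (a + 2)))
    (hno : ¬ SameComp T x (σ (a + 1)) (σ a)) :
    ∀ k, SameComp T x (σ k) (σ (a + 1)) → k = a + 1 := by
  haveI : NeZero ℓ := ⟨by omega⟩
  have h2ne : (2 : ZMod ℓ) ≠ 0 := by
    have := zmod_natCast_ne (ℓ := ℓ) (n := 2) (by omega) (by omega); simpa using this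
  rcases contig a (a + 2) hsc with ⟨k', hk', hall⟩ | ⟨k', hk', hall⟩
  · exfalso
    have hcast : ((k' : ℕ) : ZMod ℓ) = 2 := by linear_combination (hinj hk')
    have hk2 : 1 ≤ k' := by
      rcases Nat.eq_zero_or_pos k' with h0 | h
      · exfalso; rw [h0] at hcast; simp at hcast; exact h2ne hcast.symm
      · omega
    have h := hall 1 hk2
    simp only [Nat.cast_one] at h
    exact hno (sc_symm h)
  · have hcast : ((k' : ℕ) : ZMod ℓ) = -2 := by linear_combination (hinj hk')
    by_cases hbig : ℓ - 1 ≤ k'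
    · exfalso
      have h := hall (ℓ - 1) hbig
      have hc2 : ((ℓ - 1 : ℕ) : ZMod ℓ) = -1 := by
        push_cast [Nat.cast_sub (by omega : 1 ≤ ℓ)]
        simp
      rw [hc2, show a + 2 + (-1 : ZMod ℓ) = a + 1 by ring] at h
      exact hno (sc_trans (sc_symm h) (sc_symm hsc))
    · have hksmall : k' < ℓ := by omega
      have hkval : k' = ℓ - 2 := by
        have hv := congrArg ZMod.val hcast
        rw [ZMod.val_cast_of_lt hksmall] at hv
        have he2 : ((-2 : ZMod ℓ)) = ((ℓ - 2 : ℕ) : ZMod ℓ) := by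
          push_cast [Nat.cast_sub (by omega : 2 ≤ ℓ)]
          simp
        rw [he2, ZMod.val_cast_of_lt (by omega)] at hv
        exact hv
      intro k hks
      by_contra hkne
      set m : ℕ := (k - (a + 2)).val with hm
      have hmlt : m < ℓ := ZMod.val_lt _
      have hcastm : ((m : ℕ) : ZMod ℓ) = k - (a + 2) := ZMod.natCast_zmod_val _
      have hmne : m ≠ ℓ - 1 := by
        intro he
        apply hkne
        have h1 : ((m : ℕ) : ZMod ℓ) = -1 := by
          rw [he]; push_cast [Nat.cast_sub (by omega : 1 ≤ ℓ)]; simp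
        rw [h1] at hcastm
        linear_combination -hcastm
      have h := hall m (by omega)
      rw [show (a + 2) + ((m : ℕ) : ZMod ℓ) = k by rw [hcastm]; ring] at h
      exact absurd (sc_trans (sc_symm hks) (sc_trans (sc_symm h) (sc_symm hsc))) hno


lemma deg_pos_of_adj' [Fintype V] {T : SimpleGraph V} {v w : V} (h : T.Adj v w) :
    0 < T.degree v := (T.degree_pos_iff_exists_adj v).2 ⟨w, h⟩

/-- An edge in no triangle or square with both endpoints of degree ≥ 3 has
nonpositive Lin-Lu-Yau curvature. -/
lemma kappa_nonpos [Fintype V] (G : SimpleGraph V) (hc : G.Connected) {p q : V}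
    (hpq : G.Adj p q) (h34 : noC3C4 G p q) (hdp : 3 ≤ G.degree p) (hdq : 3 ≤ G.degree q) :
    kappaLLY G p q ≤ 0 := by
  classical
  set f : V → ℤ := fun z => if z = q ∨ (G.Adj q z ∧ z ≠ p) then 1
    else if G.Adj p z then -1 else 0 with hf
  have hfp : f p = 0 := by
    rw [hf]
    simp only
    rw [if_neg, if_neg]
    · exact fun h => G.irrefl h
    · rintro (h | ⟨-, h⟩)
      · exact hpq.ne h
      · exact h rfl
  have hfq : f q = 1 := by rw [hf]; simp
  have hq_side : ∀ z, G.Adj q z → z ≠ p → f z = 1 := by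
    intro z h hne
    rw [hf]; simp only
    rw [if_pos (Or.inr ⟨h, hne⟩)]
  have hp_side : ∀ z, G.Adj p z → z ≠ q → f z = -1 := by
    intro z h hne
    have h1 : ¬ G.Adj q z := fun hqz => h34.1 z ⟨h, hqz.symm⟩
    rw [hf]; simp only
    rw [if_neg, if_pos h]
    rintro (h' | ⟨h', -⟩)
    · exact hne h'
    · exact h1 h'
  have hvals : ∀ z, f z = 1 ∨ f z = 0 ∨ f z = -1 := by
    intro z; rw [hf]; simp only; split_ifs <;> simp
  have key : ∀ u v : V, f u - f v ≤ (G.dist u v : ℤ) := by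
    intro u v
    rcases le_or_gt (f u - f v) 0 with h | h
    · exact le_trans h (by positivity)
    have hne : u ≠ v := by rintro rfl; omega
    have hd1 : 1 ≤ G.dist u v := hc.pos_dist_of_ne hne
    rcases le_or_gt (f u - f v) 1 with h1 | h1
    · exact le_trans h1 (by exact_mod_cast hd1)
    have hfu : f u = 1 := by rcases hvals u with h' | h' | h' <;> rcases hvals v with h'' | h'' | h'' <;> omega
    have hfv : f v = -1 := by rcases hvals u with h' | h' | h' <;> rcases hvals v with h'' | h'' | h'' <;> omega
    have hvp : v ≠ p := fun he => by rw [he, hfp] at hfv; omega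
    have hu : u = q ∨ (G.Adj q u ∧ u ≠ p) := by
      by_contra hcon
      rw [hf] at hfu; simp only at hfu
      rw [if_neg hcon] at hfu
      split_ifs at hfu <;> omega
    have hvnot : ¬(v = q ∨ (G.Adj q v ∧ v ≠ p)) := by
      intro hcon
      rw [hf] at hfv; simp only at hfv
      rw [if_pos hcon] at hfv
      omega
    have hvq : v ≠ q := fun he => hvnot (Or.inl he)
    have hqv : ¬ G.Adj q v := fun h' => hvnot (Or.inr ⟨h', hvp⟩)
    have hvadj : G.Adj p v := by
      by_contra hcon
      rw [hf] at hfv; simp only at hfv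
      rw [if_neg, if_neg hcon] at hfv
      · omega
      · exact hvnot
    have hnadj : ¬ G.Adj u v := by
      rcases hu with rfl | ⟨hqu, hup⟩
      · exact hqv
      · intro h'
        rcases h34.2 v u hvadj h'.symm hqu.symm with he | he
        · exact hvq he
        · exact hup he
    have hd2 : 2 ≤ G.dist u v := by
      have hne1 : G.dist u v ≠ 1 := fun hone => hnadj ((G.dist_eq_one_iff_adj).mp hone)
      omega
    have : f u - f v = 2 := by omega
    rw [this]
    exact_mod_cast hd2
  have hLip : ∀ u ∈ insert p (G.neighborSet p) ∪ insert q (G.neighborSet q),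
      ∀ v ∈ insert p (G.neighborSet p) ∪ insert q (G.neighborSet q),
        |f u - f v| ≤ (G.dist u v : ℤ) := by
    intro u _ v _
    rw [abs_sub_le_iff]
    refine ⟨key u v, ?_⟩
    rw [G.dist_comm]
    exact key v u
  have hdp0 : (0 : ℝ) < G.degree p := by exact_mod_cast deg_pos_of_adj' hpq
  have hdq0 : (0 : ℝ) < G.degree q := by exact_mod_cast deg_pos_of_adj' hpq.symm
  have hNp : q ∈ G.neighborFinset p := (G.mem_neighborFinset p q).2 hpq
  have hNq : p ∈ G.neighborFinset q := (G.mem_neighborFinset q p).2 hpq.symm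
  have hsum_p : ∑ w ∈ G.neighborFinset p, ((f w : ℝ) - (f p : ℝ))
      = 2 - (G.degree p : ℝ) := by
    rw [← Finset.add_sum_erase _ _ hNp]
    have h1 : ∀ w ∈ (G.neighborFinset p).erase q, ((f w : ℝ) - (f p : ℝ)) = -1 := by
      intro w hw
      rw [Finset.mem_erase, SimpleGraph.mem_neighborFinset] at hw
      rw [hp_side w hw.2 hw.1, hfp]
      norm_num
    rw [Finset.sum_congr rfl h1, Finset.sum_const, Finset.card_erase_of_mem hNp]
    rw [hfq, hfp]
    have hd1 : 1 ≤ (G.neighborFinset p).card := by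
      rw [G.card_neighborFinset_eq_degree]; exact deg_pos_of_adj' hpq
    rw [nsmul_eq_mul, ← G.card_neighborFinset_eq_degree, Nat.cast_sub hd1]
    push_cast
    ring
  have hsum_q : ∑ w ∈ G.neighborFinset q, ((f w : ℝ) - (f q : ℝ)) = -1 := by
    rw [← Finset.add_sum_erase _ _ hNq]
    have h1 : ∀ w ∈ (G.neighborFinset q).erase p, ((f w : ℝ) - (f q : ℝ)) = 0 := by
      intro w hw
      rw [Finset.mem_erase, SimpleGraph.mem_neighborFinset] at hw
      rw [hq_side w hw.2 hw.1, hfq]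
      norm_num
    rw [Finset.sum_congr rfl h1, Finset.sum_const, hfq, hfp]
    simp
  have hmem : lap G f p - lap G f q ∈ { r : ℝ | ∃ f : V → ℤ,
      (∀ u ∈ insert p (G.neighborSet p) ∪ insert q (G.neighborSet q),
        ∀ v ∈ insert p (G.neighborSet p) ∪ insert q (G.neighborSet q),
          |f u - f v| ≤ (G.dist u v : ℤ)) ∧
      f q - f p = 1 ∧ r = lap G f p - lap G f q } :=
    ⟨f, hLip, by rw [hfq, hfp]; norm_num, rfl⟩
  have hbdd : BddBelow { r : ℝ | ∃ f : V → ℤ,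
      (∀ u ∈ insert p (G.neighborSet p) ∪ insert q (G.neighborSet q),
        ∀ v ∈ insert p (G.neighborSet p) ∪ insert q (G.neighborSet q),
          |f u - f v| ≤ (G.dist u v : ℤ)) ∧
      f q - f p = 1 ∧ r = lap G f p - lap G f q } := by
    refine ⟨-2, ?_⟩
    rintro r ⟨g, hg, hg1, rfl⟩
    have hbp : -1 ≤ lap G g p := by
      have hterm : ∀ w ∈ G.neighborFinset p, (-1 : ℝ) ≤ (g w : ℝ) - (g p : ℝ) := by
        intro w hw
        rw [SimpleGraph.mem_neighborFinset] at hw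
        have := hg w (Or.inl (Set.mem_insert_of_mem _ hw)) p (Or.inl (Set.mem_insert _ _))
        rw [SimpleGraph.dist_eq_one_iff_adj.mpr hw.symm] at this
        have h2 : |(g w : ℝ) - (g p : ℝ)| ≤ 1 := by exact_mod_cast this
        have := abs_le.mp h2
        linarith [this.1]
      have hsum := Finset.sum_le_sum hterm
      rw [Finset.sum_const] at hsum
      rw [lap, le_div_iff₀ hdp0]
      calc (-1 : ℝ) * (G.degree p)
          = (G.neighborFinset p).card • (-1 : ℝ) := by
            rw [G.card_neighborFinset_eq_degree]; push_cast; ring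
        _ ≤ _ := hsum
    have hbq : lap G g q ≤ 1 := by
      have hterm : ∀ w ∈ G.neighborFinset q, (g w : ℝ) - (g q : ℝ) ≤ 1 := by
        intro w hw
        rw [SimpleGraph.mem_neighborFinset] at hw
        have := hg w (Or.inr (Set.mem_insert_of_mem _ hw)) q (Or.inr (Set.mem_insert _ _))
        rw [SimpleGraph.dist_eq_one_iff_adj.mpr hw.symm] at this
        have h2 : |(g w : ℝ) - (g q : ℝ)| ≤ 1 := by exact_mod_cast this
        linarith [(abs_le.mp h2).2]
      have hsum := Finset.sum_le_sum hterm
      rw [Finset.sum_const] at hsum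
      rw [lap, div_le_iff₀ hdq0]
      calc ∑ w ∈ G.neighborFinset q, ((g w : ℝ) - (g q : ℝ))
          ≤ (G.neighborFinset q).card • (1 : ℝ) := hsum
        _ = 1 * (G.degree q) := by rw [G.card_neighborFinset_eq_degree]; push_cast; ring
    linarith
  have hle := csInf_le hbdd hmem
  refine le_trans hle ?_
  rw [lap, lap, hsum_p, hsum_q]
  have h3p : (3 : ℝ) ≤ G.degree p := by exact_mod_cast hdp
  have h3q : (3 : ℝ) ≤ G.degree q := by exact_mod_cast hdq
  rw [div_sub_div _ _ (ne_of_gt hdp0) (ne_of_gt hdq0)]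
  apply div_nonpos_of_nonpos_of_nonneg
  · nlinarith [mul_le_mul_of_nonneg_right h3p (le_of_lt hdq0),
      mul_le_mul_of_nonneg_left h3q (le_of_lt hdp0)]
  · positivity


lemma core {V : Type*} [Fintype V] (T : SimpleGraph V) (hT : T.IsTree)
    (ℓ : ℕ) (hℓ : 3 ≤ ℓ) (σ : ZMod ℓ → V) (hinj : Function.Injective σ)
    (hleaf : ∀ v : V, v ∈ Set.range σ ↔ T.degree v = 1)
    (x : V) (hx : 3 ≤ T.degree x)
    (hpos : ∀ u v : V, (halinGraph T σ).Adj u v →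
      0 < kappaLLY (halinGraph T σ) u v)
    (contig : ∀ i j : ZMod ℓ, SameComp T x (σ i) (σ j) →
      (∃ k : ℕ, σ (i + (k : ZMod ℓ)) = σ j ∧
        ∀ m : ℕ, m ≤ k → SameComp T x (σ i) (σ (i + (m : ZMod ℓ)))) ∨
      (∃ k : ℕ, σ (j + (k : ZMod ℓ)) = σ i ∧
        ∀ m : ℕ, m ≤ k → SameComp T x (σ j) (σ (j + (m : ZMod ℓ)))))
    (i : ZMod ℓ)
    (h2 : 2 ≤ {j : ZMod ℓ | SameComp T x (σ j) (σ i)}.ncard)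
    (j : ZMod ℓ) (hj : SameComp T x (σ j) (σ i))
    (hn : ¬ SameComp T x (σ (j + 1)) (σ i)) :
    {k : ZMod ℓ | SameComp T x (σ k) (σ (j + 1))}.ncard = 1 := by
  classical
  haveI : NeZero ℓ := ⟨by omega⟩
  have hdeg : ∀ k : ZMod ℓ, T.degree (σ k) = 1 := fun k => (hleaf (σ k)).1 ⟨k, rfl⟩
  have hxσ : ∀ k : ZMod ℓ, x ≠ σ k := by
    intro k he
    have h' := hdeg k
    rw [← he] at h'
    omega
  set C1 : Set (ZMod ℓ) := {k : ZMod ℓ | SameComp T x (σ k) (σ j)} with hC1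
  set C2 : Set (ZMod ℓ) := {k : ZMod ℓ | SameComp T x (σ k) (σ (j + 1))} with hC2
  have hclass : C1 = {k : ZMod ℓ | SameComp T x (σ k) (σ i)} := by
    ext k; simp only [hC1, Set.mem_setOf_eq]
    exact ⟨fun h => sc_trans h hj, fun h => sc_trans h (sc_symm hj)⟩
  have hp2 : 2 ≤ C1.ncard := by rw [hclass]; exact h2
  have hn' : ¬ SameComp T x (σ (j + 1)) (σ j) := fun h => hn (sc_trans h hj)
  by_contra hcon
  have hone : 1 ≤ C2.ncard := by
    have hne : C2.Nonempty := ⟨j + 1, sc_refl (hxσ _)⟩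
    have := (Set.ncard_pos (Set.toFinite C2)).2 hne
    omega
  have hq2 : 2 ≤ C2.ncard := by omega
  -- leaves adjacent to x form singleton classes
  have hsingleton : ∀ a : ZMod ℓ, T.Adj (σ a) x → ∀ k, SameComp T x (σ k) (σ a) → k = a := by
    intro a hadj k hk
    by_contra hne
    obtain ⟨w, hw⟩ := hk
    have hxw : x ∉ w.reverse.support := by
      rwa [Walk.support_reverse, List.mem_reverse]
    have hneq : σ a ≠ σ k := fun he => hne (hinj he).symm
    obtain ⟨y, hady, r, hr⟩ := Walk.exists_eq_cons_of_ne hneq w.reverse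
    have hy : y = x := deg_one_nbr (hdeg a) hady hadj
    apply hxw
    rw [hr, Walk.support_cons]
    exact List.mem_cons.2 (Or.inr (hy ▸ r.start_mem_support))
  have hclassle : ∀ a : ZMod ℓ, (∀ k, SameComp T x (σ k) (σ a) → k = a) →
      {k : ZMod ℓ | SameComp T x (σ k) (σ a)}.ncard ≤ 1 := by
    intro a h
    have hsub : {k : ZMod ℓ | SameComp T x (σ k) (σ a)} ⊆ {a} := fun k hk => h k hk
    simpa using Set.ncard_le_ncard hsub (Set.finite_singleton a)
  -- tree neighbors of the two leaves
  obtain ⟨tp, htp⟩ := (T.degree_pos_iff_exists_adj (σ j)).1 (by rw [hdeg j]; omega)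
  obtain ⟨tq, htq⟩ := (T.degree_pos_iff_exists_adj (σ (j + 1))).1 (by rw [hdeg (j + 1)]; omega)
  have htpx : tp ≠ x := by
    intro he
    have := hclassle j (hsingleton j (he ▸ htp))
    rw [← hC1] at this
    omega
  have htqx : tq ≠ x := by
    intro he
    have := hclassle (j + 1) (hsingleton (j + 1) (he ▸ htq))
    rw [← hC2] at this
    omega
  have htpr : tp ∉ Set.range σ := halin_t_not_leaf hT hleaf hx (hdeg j) htp
  have htqr : tq ∉ Set.range σ := halin_t_not_leaf hT hleaf hx (hdeg (j + 1)) htq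
  -- two-edge walks avoiding x
  have sc_one : ∀ {u v : V}, T.Adj u v → x ≠ u → x ≠ v → SameComp T x u v := by
    intro u v h hu hv
    refine ⟨Walk.cons h Walk.nil, ?_⟩
    simp only [Walk.support_cons, Walk.support_nil, List.mem_cons, List.mem_singleton]
    rintro (h' | h' | h')
    · exact hu h'
    · exact hv h'
    · exact (List.not_mem_nil h')
  have sc_two : ∀ {u t v : V}, T.Adj u t → T.Adj t v → x ≠ u → x ≠ t → x ≠ v →
      SameComp T x u v := by
    intro u t v h1 h2' hu ht hv
    refine ⟨Walk.cons h1 (Walk.cons h2' Walk.nil), ?_⟩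
    simp only [Walk.support_cons, Walk.support_nil, List.mem_cons, List.mem_singleton]
    rintro (h | h | h | h) <;> first
      | exact hu h | exact ht h | exact hv h | exact (List.not_mem_nil h)
  -- ℓ ≥ 5
  have hdisj : Disjoint C1 C2 := by
    rw [Set.disjoint_left]
    intro k h1 h2'
    exact hn' (sc_trans (sc_symm h2') h1)
  have hℓ5 : 5 ≤ ℓ := by
    have hcard3 : 3 ≤ (T.neighborFinset x).card := by
      rwa [T.card_neighborFinset_eq_degree]
    obtain ⟨s, hs, hs3⟩ := Finset.exists_subset_card_eq hcard3
    obtain ⟨y1, y2, y3, h12, h13, h23, rfl⟩ := Finset.card_eq_three.mp hs3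
    have hy : ∀ y ∈ ({y1, y2, y3} : Finset V), T.Adj x y := fun y hym =>
      (T.mem_neighborFinset x y).1 (hs hym)
    have hyl : ∀ y ∈ ({y1, y2, y3} : Finset V), ∃ k : ZMod ℓ, SameComp T x (σ k) y := by
      intro y hym
      obtain ⟨z, hz1, hz2⟩ := exists_leaf hT (hy y hym).ne
      obtain ⟨k, rfl⟩ := (hleaf z).2 hz1
      exact ⟨k, hz2⟩
    obtain ⟨k1, hk1⟩ := hyl y1 (by simp)
    obtain ⟨k2, hk2⟩ := hyl y2 (by simp)
    obtain ⟨k3, hk3⟩ := hyl y3 (by simp)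
    have hpair : ∀ (a b : ZMod ℓ) (ya yb : V), T.Adj x ya → T.Adj x yb → ya ≠ yb →
        SameComp T x (σ a) ya → SameComp T x (σ b) yb → SameComp T x (σ a) (σ b) → False := by
      intro a b ya yb hya hyb hnne ha hb hab
      exact distinct_comps hT hya hyb hnne (sc_trans (sc_symm ha) (sc_trans hab hb))
    have h12' := hpair k1 k2 y1 y2 (hy y1 (by simp)) (hy y2 (by simp)) h12 hk1 hk2
    have h13' := hpair k1 k3 y1 y3 (hy y1 (by simp)) (hy y3 (by simp)) h13 hk1 hk3
    have h23' := hpair k2 k3 y2 y3 (hy y2 (by simp)) (hy y3 (by simp)) h23 hk2 hk3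
    have hshare1 : ∀ k k' : ZMod ℓ, k ∈ C1 → k' ∈ C1 → SameComp T x (σ k) (σ k') :=
      fun k k' h h' => sc_trans h (sc_symm h')
    have hshare2 : ∀ k k' : ZMod ℓ, k ∈ C2 → k' ∈ C2 → SameComp T x (σ k) (σ k') :=
      fun k k' h h' => sc_trans h (sc_symm h')
    have hk0 : ∃ k0 : ZMod ℓ, k0 ∉ C1 ∧ k0 ∉ C2 := by
      by_contra hcon'
      push_neg at hcon'
      have honeof : ∀ k : ZMod ℓ, k ∈ C1 ∨ k ∈ C2 := fun k => or_iff_not_imp_left.mpr (hcon' k)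
      rcases honeof k1 with ha | ha <;> rcases honeof k2 with hb | hb <;>
        rcases honeof k3 with hc | hc
      · exact h12' (hshare1 k1 k2 ha hb)
      · exact h12' (hshare1 k1 k2 ha hb)
      · exact h13' (hshare1 k1 k3 ha hc)
      · exact h23' (hshare2 k2 k3 hb hc)
      · exact h23' (hshare1 k2 k3 hb hc)
      · exact h13' (hshare2 k1 k3 ha hc)
      · exact h12' (hshare2 k1 k2 ha hb)
      · exact h12' (hshare2 k1 k2 ha hb)
    obtain ⟨k0, hk01, hk02⟩ := hk0
    have hdk : Disjoint (C1 ∪ C2) {k0} := by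
      rw [Set.disjoint_singleton_right]
      simp only [Set.mem_union]
      tauto
    have hcount : (C1 ∪ C2 ∪ {k0}).ncard = C1.ncard + C2.ncard + 1 := by
      rw [Set.ncard_union_eq hdk (Set.toFinite _) (Set.toFinite _),
        Set.ncard_union_eq hdisj (Set.toFinite _) (Set.toFinite _), Set.ncard_singleton]
    have hle : (C1 ∪ C2 ∪ {k0}).ncard ≤ (Set.univ : Set (ZMod ℓ)).ncard :=
      Set.ncard_le_ncard (Set.subset_univ _) Set.finite_univ
    rw [Set.ncard_univ, Nat.card_eq_fintype_card, ZMod.card] at hle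
    omega
  have h1ne : (1 : ZMod ℓ) ≠ 0 := by
    have := zmod_natCast_ne (ℓ := ℓ) (n := 1) (by omega) (by omega); simpa using this
  have h2ne : (2 : ZMod ℓ) ≠ 0 := by
    have := zmod_natCast_ne (ℓ := ℓ) (n := 2) (by omega) (by omega); simpa using this
  have h3ne : (3 : ZMod ℓ) ≠ 0 := by
    have := zmod_natCast_ne (ℓ := ℓ) (n := 3) (by omega) (by omega); simpa using this
  have h4ne : (4 : ZMod ℓ) ≠ 0 := by
    have := zmod_natCast_ne (ℓ := ℓ) (n := 4) (by omega) (by omega); simpa using this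
  -- neighbor characterizations
  have hnbrp : ∀ b, (halinGraph T σ).Adj (σ j) b ↔ b = tp ∨ b = σ (j + 1) ∨ b = σ (j - 1) :=
    halin_leaf_nbr hℓ hinj (hdeg j) htp
  have hnbrq : ∀ b, (halinGraph T σ).Adj (σ (j + 1)) b ↔
      b = tq ∨ b = σ (j + 2) ∨ b = σ j := by
    intro b
    have h' := halin_leaf_nbr hℓ hinj (hdeg (j + 1)) htq b
    rwa [show j + 1 + 1 = j + 2 by ring, show j + 1 - 1 = j by ring] at h'
  have halin_tree : ∀ {a b : V}, (halinGraph T σ).Adj a b → a ∉ Set.range σ → T.Adj a b := by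
    intro a b hab har
    rcases halin_adj.1 hab with h | ⟨-, ⟨m, h1', -⟩ | ⟨m, -, h2'⟩⟩
    · exact h
    · exact absurd ⟨m, h1'.symm⟩ har
    · exact absurd ⟨m + 1, h2'.symm⟩ har
  -- contradiction helpers
  have case_tptq : tp = tq → False := by
    intro he
    exact hn' (sc_symm (sc_two htp (he ▸ T.adj_symm htq) (hxσ j) (Ne.symm htpx) (hxσ (j + 1))))
  have case_tp_j2 : T.Adj tp (σ (j + 2)) → False := by
    intro he
    have hsc : SameComp T x (σ j) (σ (j + 2)) :=
      sc_two htp he (hxσ j) (Ne.symm htpx) (hxσ (j + 2))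
    have hall := contigApp hℓ5 hinj contig hsc hn'
    have := hclassle (j + 1) hall
    rw [← hC2] at this
    omega
  have case_jm1_tq : T.Adj (σ (j - 1)) tq → False := by
    intro he
    have hscm : SameComp T x (σ (j - 1)) (σ (j + 1)) :=
      sc_two he (T.adj_symm htq) (hxσ (j - 1)) (Ne.symm htqx) (hxσ (j + 1))
    have hsc : SameComp T x (σ (j - 1)) (σ (j - 1 + 2)) := by
      rwa [show j - 1 + 2 = j + 1 by ring]
    have hno : ¬ SameComp T x (σ (j - 1 + 1)) (σ (j - 1)) := by
      rw [show j - 1 + 1 = j by ring]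
      intro h
      exact hn' (sc_trans (sc_symm hscm) (sc_symm h))
    have hall := contigApp hℓ5 hinj contig hsc hno
    rw [show j - 1 + 1 = j by ring] at hall
    have := hclassle j hall
    rw [← hC1] at this
    omega
  -- no triangles or squares through the edge
  have hC34 : noC3C4 (halinGraph T σ) (σ j) (σ (j + 1)) := by
    constructor
    · rintro z ⟨hz1, hz2⟩
      rcases (hnbrp z).1 hz1 with rfl | rfl | rfl
      · rcases (hnbrq z).1 hz2.symm with he | he | he
        · exact case_tptq he
        · exact htpr ⟨_, he.symm⟩
        · exact htpr ⟨_, he.symm⟩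
      · exact (halinGraph T σ).irrefl hz2
      · rcases (hnbrq (σ (j - 1))).1 hz2.symm with he | he | he
        · exact htqr ⟨_, he⟩
        · exact h3ne (by linear_combination -(hinj he))
        · exact h1ne (by linear_combination -(hinj he))
    · intro u v hu huv hv
      by_contra hcon'
      push_neg at hcon'
      obtain ⟨huq, hvp⟩ := hcon'
      rcases (hnbrp u).1 hu with rfl | rfl | rfl
      · rcases (hnbrq v).1 hv.symm with rfl | rfl | rfl
        · have hT' := halin_tree huv htpr
          exact hn' (sc_symm (sc_trans (sc_one htp (hxσ j) (Ne.symm htpx))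
            (sc_two hT' (T.adj_symm htq) (Ne.symm htpx) (Ne.symm htqx) (hxσ (j + 1)))))
        · exact case_tp_j2 (halin_tree huv htpr)
        · exact hvp rfl
      · exact huq rfl
      · rcases (hnbrq v).1 hv.symm with rfl | rfl | rfl
        · exact case_jm1_tq (T.adj_symm (halin_tree huv.symm htqr))
        · -- σ(j-1) adjacent σ(j+2)
          rcases halin_adj.1 huv with h | ⟨-, ⟨m, h1', h2'⟩ | ⟨m, h1', h2'⟩⟩
          · exact no_adj_leaves hT.isConnected h (hdeg (j - 1)) (hdeg (j + 2)) hx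
          · have hm : m = j - 1 := (hinj h1').symm
            rw [hm] at h2'
            exact h2ne (by linear_combination (hinj h2'))
          · have hm : m = j + 2 := (hinj h1').symm
            rw [hm] at h2'
            exact h4ne (by linear_combination -(hinj h2'))
        · exact hvp rfl
  -- curvature contradiction
  have hadjpq : (halinGraph T σ).Adj (σ j) (σ (j + 1)) :=
    (hnbrp (σ (j + 1))).2 (Or.inr (Or.inl rfl))
  have hk1 := hpos _ _ hadjpq
  have hk2 := kappa_nonpos _ (halin_connected hT) hadjpq hC34
    (halin_leaf_deg3 hℓ hT hinj hleaf hx (hdeg j) htp)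
    (by
      have := halin_leaf_deg3 hℓ hT hinj hleaf hx (hdeg (j + 1)) htq
      exact this)
  linarith


end Aux

theorem stmt12 {V : Type*} [Fintype V] (T : SimpleGraph V) (hT : T.IsTree)
    (ℓ : ℕ) (hℓ : 3 ≤ ℓ) (σ : ZMod ℓ → V) (hinj : Function.Injective σ)
    (hleaf : ∀ v : V, v ∈ Set.range σ ↔ T.degree v = 1)
    (x : V) (hmax : ∀ v : V, T.degree v ≤ T.degree x) (hx : 3 ≤ T.degree x)
    (hpos : ∀ u v : V, (halinGraph T σ).Adj u v →
      0 < kappaLLY (halinGraph T σ) u v)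
    (contig : ∀ i j : ZMod ℓ, SameComp T x (σ i) (σ j) →
      (∃ k : ℕ, σ (i + (k : ZMod ℓ)) = σ j ∧
        ∀ m : ℕ, m ≤ k → SameComp T x (σ i) (σ (i + (m : ZMod ℓ)))) ∨
      (∃ k : ℕ, σ (j + (k : ZMod ℓ)) = σ i ∧
        ∀ m : ℕ, m ≤ k → SameComp T x (σ j) (σ (j + (m : ZMod ℓ)))))
    (i : ZMod ℓ)
    (h2 : 2 ≤ {j : ZMod ℓ | SameComp T x (σ j) (σ i)}.ncard) :
    ∀ j : ZMod ℓ, SameComp T x (σ j) (σ i) →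
      (¬ SameComp T x (σ (j + 1)) (σ i) →
        {k : ZMod ℓ | SameComp T x (σ k) (σ (j + 1))}.ncard = 1) ∧
      (¬ SameComp T x (σ (j - 1)) (σ i) →
        {k : ZMod ℓ | SameComp T x (σ k) (σ (j - 1))}.ncard = 1) := by
  intro j hj
  constructor
  · intro hn
    exact core T hT ℓ hℓ σ hinj hleaf x hx hpos contig i h2 j hj hn
  · intro hn
    -- apply `core` to the reversed cyclic order
    set σ' : ZMod ℓ → V := fun k => σ (-k) with hσ'
    have hσ'e : ∀ k, σ' k = σ (-k) := fun k => by rw [hσ']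
    have hinj' : Function.Injective σ' := by
      intro a b h
      rw [hσ'e, hσ'e] at h
      exact neg_injective (hinj h)
    have hrange : Set.range σ' = Set.range σ := by
      ext v
      constructor
      · rintro ⟨k, rfl⟩; exact ⟨-k, (hσ'e k).symm⟩
      · rintro ⟨k, rfl⟩; exact ⟨-k, by rw [hσ'e, neg_neg]⟩
    have hleaf' : ∀ v : V, v ∈ Set.range σ' ↔ T.degree v = 1 := by
      intro v; rw [hrange]; exact hleaf v
    have hrel : ∀ a b : V, (∃ m : ZMod ℓ, a = σ' m ∧ b = σ' (m + 1)) ↔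
        (∃ m : ZMod ℓ, b = σ m ∧ a = σ (m + 1)) := by
      intro a b
      constructor
      · rintro ⟨m, h1, h2⟩
        rw [hσ'e] at h1 h2
        refine ⟨-(m + 1), h2, ?_⟩
        rw [h1]; congr 1; ring
      · rintro ⟨m, h1, h2⟩
        refine ⟨-(m + 1), ?_, ?_⟩
        · rw [hσ'e, neg_neg]; exact h2
        · rw [hσ'e, show -(-(m + 1) + 1) = m by ring]; exact h1
    have hgraph : halinGraph T σ' = halinGraph T σ := by
      unfold halinGraph
      congr 1
      ext a b
      rw [SimpleGraph.fromRel_adj, SimpleGraph.fromRel_adj, hrel a b, hrel b a]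
      exact ⟨fun h => ⟨h.1, h.2.symm⟩, fun h => ⟨h.1, h.2.symm⟩⟩
    have hpos' : ∀ u v : V, (halinGraph T σ').Adj u v →
        0 < kappaLLY (halinGraph T σ') u v := by
      rw [hgraph]; exact hpos
    have contig' : ∀ a b : ZMod ℓ, SameComp T x (σ' a) (σ' b) →
        (∃ k : ℕ, σ' (a + (k : ZMod ℓ)) = σ' b ∧
          ∀ m : ℕ, m ≤ k → SameComp T x (σ' a) (σ' (a + (m : ZMod ℓ)))) ∨
        (∃ k : ℕ, σ' (b + (k : ZMod ℓ)) = σ' a ∧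
          ∀ m : ℕ, m ≤ k → SameComp T x (σ' b) (σ' (b + (m : ZMod ℓ)))) := by
      intro a b hab
      rw [hσ'e, hσ'e] at hab
      rcases contig (-b) (-a) (sc_symm hab) with ⟨k, hk, hall⟩ | ⟨k, hk, hall⟩
      · left
        refine ⟨k, ?_, ?_⟩
        · rw [hσ'e, hσ'e]; congr 1; linear_combination -(hinj hk)
        · intro m hm
          rw [hσ'e, hσ'e]
          have h1 := hall (k - m) (Nat.sub_le k m)
          have h2 := hall k le_rfl
          rw [hk] at h2
          have he : -b + ((k - m : ℕ) : ZMod ℓ) = -(a + (m : ZMod ℓ)) := by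
            push_cast [Nat.cast_sub hm]
            linear_combination (hinj hk)
          rw [he] at h1
          exact sc_trans (sc_symm h2) h1
      · right
        refine ⟨k, ?_, ?_⟩
        · rw [hσ'e, hσ'e]; congr 1; linear_combination -(hinj hk)
        · intro m hm
          rw [hσ'e, hσ'e]
          have h1 := hall (k - m) (Nat.sub_le k m)
          have h2 := hall k le_rfl
          rw [hk] at h2
          have he : -a + ((k - m : ℕ) : ZMod ℓ) = -(b + (m : ZMod ℓ)) := by
            push_cast [Nat.cast_sub hm]
            linear_combination (hinj hk)
          rw [he] at h1
          exact sc_trans (sc_symm h2) h1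
    have hpre : ∀ S : Set (ZMod ℓ), (Neg.neg ⁻¹' S).ncard = S.ncard := by
      intro S
      have himg : Neg.neg ⁻¹' S = Neg.neg '' S := by
        ext k
        simp only [Set.mem_preimage, Set.mem_image]
        constructor
        · intro h; exact ⟨-k, h, by simp⟩
        · rintro ⟨m, hm, rfl⟩; simpa using hm
      rw [himg, Set.ncard_image_of_injective _ neg_injective]
    have h2' : 2 ≤ {k : ZMod ℓ | SameComp T x (σ' k) (σ' (-i))}.ncard := by
      have hseteq : {k : ZMod ℓ | SameComp T x (σ' k) (σ' (-i))}
          = Neg.neg ⁻¹' {k : ZMod ℓ | SameComp T x (σ k) (σ i)} := by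
        ext k
        simp only [Set.mem_setOf_eq, Set.mem_preimage, hσ'e, neg_neg]
      rw [hseteq, hpre]
      exact h2
    have hj' : SameComp T x (σ' (-j)) (σ' (-i)) := by
      rw [hσ'e, hσ'e, neg_neg, neg_neg]; exact hj
    have hn2' : ¬ SameComp T x (σ' (-j + 1)) (σ' (-i)) := by
      rw [hσ'e, hσ'e, neg_neg, show -(-j + 1) = j - 1 by ring]
      exact hn
    have hres := core T hT ℓ hℓ σ' hinj' hleaf' x hx hpos' contig' (-i) h2' (-j) hj' hn2'
    have hseteq2 : {k : ZMod ℓ | SameComp T x (σ' k) (σ' (-j + 1))}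
        = Neg.neg ⁻¹' {k : ZMod ℓ | SameComp T x (σ k) (σ (j - 1))} := by
      ext k
      simp only [Set.mem_setOf_eq, Set.mem_preimage, hσ'e,
        show -(-j + 1) = j - 1 by ring]
    rw [hseteq2, hpre] at hres
    exact hres
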